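/- Let m > 3 be an integer with 3 ∣ m and m ∉ {6, 12, 30}. Then there exists an integer c with c ≡ 2 (mod 3), gcd(c, m) = 1, and the fractional part of c/m strictly less than 1/3. -/

import Mathlib

set_option maxHeartbeats 1000000

open Finset

/-- Every `N > 1` with `N ≡ 2 [MOD 3]` has a prime factor `≡ 2 [MOD 3]`. -/
lemma exists_prime_factor_two_mod_three :
    ∀ N : ℕ, 1 < N → N % 3 = 2 → ∃ q : ℕ, q.Prime ∧ q ∣ N ∧ q % 3 = 2 := by
  intro N
  induction N using Nat.strong_induction_on with
  | _ N ih =>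
    intro h1 h2
    set q := N.minFac with hq
    have hqp : q.Prime := Nat.minFac_prime (by omega)
    have hqd : q ∣ N := Nat.minFac_dvd N
    rcases (by omega : q % 3 = 0 ∨ q % 3 = 1 ∨ q % 3 = 2) with h | h | h
    · exfalso
      have h3q : 3 ∣ q := Nat.dvd_of_mod_eq_zero h
      have : q = 3 := ((Nat.prime_dvd_prime_iff_eq Nat.prime_three hqp).mp h3q).symm
      have : (3 : ℕ) ∣ N := this ▸ hqd
      omega
    · -- q % 3 = 1, recurse on N / q
      obtain ⟨N', hN'⟩ := hqd
      have hq2 : 2 ≤ q := hqp.two_le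
      have hmm : N % 3 = N' % 3 := by rw [hN', Nat.mul_mod, h, one_mul, Nat.mod_mod_of_dvd _ dvd_rfl]
      have hN'mod : N' % 3 = 2 := by omega
      have hN'1 : 1 < N' := by omega
      have hN'lt : N' < N := by nlinarith
      obtain ⟨p, hp, hpd, hp3⟩ := ih N' hN'lt hN'1 hN'mod
      exact ⟨p, hp, hpd.trans ⟨q, by rw [hN', Nat.mul_comm]⟩, hp3⟩
    · exact ⟨q, hqp, hqd, h⟩

lemma key_nat (M : ℕ) (h9 : 9 ≤ M) (h3 : 3 ∣ M) (h12 : M ≠ 12) (h30 : M ≠ 30) :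
    ∃ c : ℕ, 0 < c ∧ c % 3 = 2 ∧ Nat.Coprime c M ∧ 3 * c < M := by
  have hM0 : M ≠ 0 := by omega
  by_cases h2 : 2 ∣ M
  · by_cases h5 : 5 ∣ M
    · by_cases h11 : 11 ∣ M
      · -- deep case: 2, 5, 11 all divide M
        set S : Finset ℕ := M.primeFactors.filter (fun p => p % 3 = 2) with hS
        set P : ℕ := ∏ p ∈ S, p with hP
        set Q : ℕ := ∏ p ∈ S.erase 2, p with hQ
        have hmemS : ∀ q : ℕ, q.Prime → q % 3 = 2 → q ∣ M → q ∈ S := by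
          intro q hq hq3 hqd
          simp [hS, Nat.mem_primeFactors, hq, hqd, hM0, hq3]
        have h2S : 2 ∈ S := hmemS 2 Nat.prime_two rfl h2
        have h5S : 5 ∈ S := hmemS 5 (by norm_num) rfl h5
        have h11S : 11 ∈ S := hmemS 11 (by norm_num) rfl h11
        have hSprime : ∀ p ∈ S, p.Prime := by
          intro p hp
          exact Nat.prime_of_mem_primeFactors (Finset.mem_filter.mp hp).1
        have hSmod : ∀ p ∈ S, p % 3 = 2 := by
          intro p hp
          exact (Finset.mem_filter.mp hp).2
        have hPdvd : P ∣ M :=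
          (Finset.prod_dvd_prod_of_subset _ _ _ (Finset.filter_subset _ _)).trans
            (Nat.prod_primeFactors_dvd M)
        have hdvdP : ∀ q : ℕ, q ∈ S → q ∣ P := fun q hq => Finset.dvd_prod_of_mem _ hq
        have h3P : ¬ (3 ∣ P) := by
          intro hd
          obtain ⟨p, hpS, hpd⟩ := (Nat.prime_three.prime.dvd_finset_prod_iff _).mp hd
          have hp3 : p = 3 :=
            ((Nat.prime_dvd_prime_iff_eq Nat.prime_three (hSprime p hpS)).mp hpd).symm
          have hpm := hSmod p hpS
          rw [hp3] at hpm
          norm_num at hpm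
        have h3Pdvd : 3 * P ∣ M :=
          Nat.Coprime.mul_dvd_of_dvd_of_dvd
            ((Nat.Prime.coprime_iff_not_dvd Nat.prime_three).mpr h3P) h3 hPdvd
        have h110 : (110 : ℕ) ∣ P := by
          have d2 : (2:ℕ) ∣ P := hdvdP 2 h2S
          have d5 : (5:ℕ) ∣ P := hdvdP 5 h5S
          have d11 : (11:ℕ) ∣ P := hdvdP 11 h11S
          have d10 : (10:ℕ) ∣ P := (Nat.coprime_primes Nat.prime_two (by norm_num)).mpr
            (by norm_num) |>.mul_dvd_of_dvd_of_dvd d2 d5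
          exact Nat.Coprime.mul_dvd_of_dvd_of_dvd (by norm_num) d10 d11
        have hPpos : 0 < P := Finset.prod_pos (fun p hp => (hSprime p hp).pos)
        have hPQ : P = 2 * Q := (Finset.mul_prod_erase S _ h2S).symm
        have hQodd : ¬ (2 ∣ Q) := by
          intro hd
          obtain ⟨p, hpS, hpd⟩ := (Nat.prime_two.prime.dvd_finset_prod_iff _).mp hd
          have hpmem := Finset.mem_erase.mp hpS
          have : p = 2 :=
            ((Nat.prime_dvd_prime_iff_eq Nat.prime_two (hSprime p hpmem.2)).mp hpd).symm
          exact hpmem.1 this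
        have h55 : (55 : ℕ) ∣ Q := by
          have d5 : (5:ℕ) ∣ Q := Finset.dvd_prod_of_mem _
            (Finset.mem_erase.mpr ⟨by norm_num, h5S⟩)
          have d11 : (11:ℕ) ∣ Q := Finset.dvd_prod_of_mem _
            (Finset.mem_erase.mpr ⟨by norm_num, h11S⟩)
          exact Nat.Coprime.mul_dvd_of_dvd_of_dvd (by norm_num) d5 d11
        have hQpos : 0 < Q := Finset.prod_pos
          (fun p hp => (hSprime p (Finset.mem_of_mem_erase hp)).pos)
        -- forget the definitions of S, P, Q
        clear_value S P Q
        clear hS hP hQ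
        have h3PM : 3 * P ≤ M := Nat.le_of_dvd (Nat.pos_of_ne_zero hM0) h3Pdvd
        have hP110 : 110 ≤ P := Nat.le_of_dvd hPpos h110
        have hQ55 : 55 ≤ Q := Nat.le_of_dvd hQpos h55
        -- helper to finish from a found prime
        have finish : ∀ N : ℕ, 1 < N → N % 3 = 2 → 3 * N < M →
            (∀ q : ℕ, q.Prime → q % 3 = 2 → q ∣ N → ¬ q ∣ M) →
            ∃ c : ℕ, 0 < c ∧ c % 3 = 2 ∧ Nat.Coprime c M ∧ 3 * c < M := by
          intro N hN1 hN3 hNM hnd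
          obtain ⟨q, hq, hqN, hq3⟩ := exists_prime_factor_two_mod_three N hN1 hN3
          refine ⟨q, hq.pos, hq3, (hq.coprime_iff_not_dvd).mpr (hnd q hq hq3 hqN), ?_⟩
          have hle : q ≤ N := Nat.le_of_dvd (by clear * - hN1; omega) hqN
          clear * - hle hNM
          omega
        rcases (by clear * -; omega : P % 3 = 0 ∨ P % 3 = 1 ∨ P % 3 = 2) with hPm | hPm | hPm
        · exact absurd (Nat.dvd_of_mod_eq_zero hPm) h3P
        · -- P ≡ 1 [MOD 3]; use N = Q - 6
          refine finish (Q - 6) (by clear * - hQ55; omega) (by clear * - hQ55 hPQ hPm; omega) (by clear * - hQ55 hPQ h3PM; omega) ?_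
          intro q hq hq3 hqN hqM
          have hqP : q ∣ 2 * Q := hPQ ▸ hdvdP q (hmemS q hq hq3 hqM)
          have hq2 : q ≠ 2 := by
            rintro rfl
            clear * - hqN hQodd hQ55
            omega
          have hqQ : q ∣ Q := by
            rcases (Nat.Prime.dvd_mul hq).mp hqP with h | h
            · exact absurd ((Nat.prime_dvd_prime_iff_eq hq Nat.prime_two).mp h) hq2
            · exact h
          have hq6 : q ∣ 6 := by
            have hds := Nat.dvd_sub hqQ hqN
            have h6 : Q - (Q - 6) = 6 := by clear * - hQ55; omega
            rwa [h6] at hds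
          have hle : q ≤ 6 := Nat.le_of_dvd (by norm_num) hq6
          have hpos : 0 < q := hq.pos
          rcases (by clear * - hle hpos; omega : q = 1 ∨ q = 2 ∨ q = 3 ∨ q = 4 ∨ q = 5 ∨ q = 6) with
            rfl | rfl | rfl | rfl | rfl | rfl
          · exact Nat.not_prime_one hq
          · exact hq2 rfl
          · norm_num at hq3
          · norm_num at hq6
          · norm_num at hq6
          · norm_num at hq3
        · -- P ≡ 2 [MOD 3]; use N = P - 3
          refine finish (P - 3) (by clear * - hP110; omega) (by clear * - hP110 hPm; omega) (by clear * - hP110 h3PM; omega) ?_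
          intro q hq hq3 hqN hqM
          have hqP : q ∣ P := hdvdP q (hmemS q hq hq3 hqM)
          have hq3' : q ∣ 3 := by
            have hds := Nat.dvd_sub hqP hqN
            have h33 : P - (P - 3) = 3 := by clear * - hP110; omega
            rwa [h33] at hds
          have heq : q = 3 := (Nat.prime_dvd_prime_iff_eq hq Nat.prime_three).mp hq3'
          rw [heq] at hq3
          norm_num at hq3
      · refine ⟨11, by norm_num, by norm_num,
          (Nat.Prime.coprime_iff_not_dvd (by norm_num)).mpr h11, ?_⟩
        omega
    · refine ⟨5, by norm_num, by norm_num,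
        (Nat.Prime.coprime_iff_not_dvd (by norm_num)).mpr h5, ?_⟩
      omega
  · exact ⟨2, by norm_num, by norm_num, (Nat.Prime.coprime_iff_not_dvd Nat.prime_two).mpr h2, by omega⟩

theorem stmt_2 (m : ℤ) (hm : 3 < m) (h3 : 3 ∣ m) (h6 : m ≠ 6) (h12 : m ≠ 12) (h30 : m ≠ 30) :
    ∃ c : ℤ, c % 3 = 2 ∧ Int.gcd c m = 1 ∧ Int.fract ((c : ℚ) / (m : ℚ)) < 1 / 3 := by
  lift m to ℕ using (by omega : (0:ℤ) ≤ m)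
  have h9 : 9 ≤ m := by
    have h3' : 3 ∣ m := by exact_mod_cast h3
    have hm' : 3 < m := by exact_mod_cast hm
    have h6' : m ≠ 6 := by
      intro h; exact h6 (by exact_mod_cast congrArg (Nat.cast : ℕ → ℤ) h)
    omega
  obtain ⟨c, hc0, hc3, hcop, hlt⟩ := key_nat m h9 (by exact_mod_cast h3)
    (by intro h; exact h12 (by exact_mod_cast congrArg (Nat.cast : ℕ → ℤ) h))
    (by intro h; exact h30 (by exact_mod_cast congrArg (Nat.cast : ℕ → ℤ) h))
  refine ⟨(c : ℤ), ?_, ?_, ?_⟩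
  · have := congrArg (Nat.cast : ℕ → ℤ) hc3
    push_cast at this
    omega
  · rw [Int.gcd_natCast_natCast]
    exact hcop
  · have hmpos : (0 : ℚ) < (m : ℚ) := by exact_mod_cast (by omega : 0 < m)
    push_cast
    have hcm : (c : ℚ) / (m : ℚ) < 1 / 3 := by
      rw [div_lt_div_iff₀ hmpos (by norm_num)]
      have hlt' : ((3 * c : ℕ) : ℚ) < ((m : ℕ) : ℚ) := by exact_mod_cast hlt
      push_cast at hlt'
      linarith
    have hnn : (0 : ℚ) ≤ (c : ℚ) / (m : ℚ) := by positivity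
    rw [Int.fract_eq_self.mpr ⟨hnn, lt_of_lt_of_le hcm (by norm_num)⟩]
    exact hcm
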